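/- Fix L > 0, F > 0 and a > 1. For the unique fixed configuration of N particles on the segment [0, L] with x_1 = 0, x_N = L and constant force F, write Δ_k = (L/(N−1))(1 + δ_k) and q = (L/(N−1))^a F. Then as N → ∞, δ_{N−1} = −a^{−1} q (N/2 − 1) + (a^{−1}(a^{−1}+1)/12) q^2 (N−2)(N−3) + J_{N−1}(N), where J_{N−1}(N) = o(N^{−2a+2}). -/

import Mathlib

open Real Filter Set Asymptotics

/-- The repulsion force `f(r) = r^{-a}`. -/
noncomputable def fpow (a r : ℝ) : ℝ := r ^ (-a)

/-- The clockwise gaps of a configuration `x 1 < ... < x N` on the circle of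
circumference `L`: `Δ k = x (k+1) - x k` for `1 ≤ k ≤ N-1` and `Δ N = L - x N + x 1`. -/
def cgap (L : ℝ) (N : ℕ) (x : ℕ → ℝ) (k : ℕ) : ℝ :=
  if k < N then x (k + 1) - x k else L - x N + x 1

/-- A configuration of `N` particles on the circle of circumference `L`,
variant with `0 ≤ x 1 < ... < x N < L`. -/
def CircleConfigA (L : ℝ) (N : ℕ) (x : ℕ → ℝ) : Prop :=
  0 ≤ x 1 ∧ (∀ k, 1 ≤ k → k < N → x k < x (k + 1)) ∧ x N < L

/-- A fixed (critical) configuration on the circle (variant `0 ≤ x 1`, `x N < L`):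
`f(Δ (k-1)) + F (x k) - f(Δ k) = 0` for `k = 1, ..., N`, with `Δ 0 = Δ N`. -/
def CircleFixedA (a L : ℝ) (F : ℝ → ℝ) (N : ℕ) (x : ℕ → ℝ) : Prop :=
  CircleConfigA L N x ∧
  ∀ k, 1 ≤ k → k ≤ N →
    fpow a (cgap L N x (if k = 1 then N else k - 1)) + F (x k) - fpow a (cgap L N x k) = 0

/-- A configuration of `N` particles on the circle of circumference `L`,
variant with `0 < x 1 < ... < x N ≤ L`. -/
def CircleConfigB (L : ℝ) (N : ℕ) (x : ℕ → ℝ) : Prop :=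
  0 < x 1 ∧ (∀ k, 1 ≤ k → k < N → x k < x (k + 1)) ∧ x N ≤ L

/-- A fixed (critical) configuration on the circle (variant `0 < x 1`, `x N ≤ L`):
`f(Δ (k-1)) + F (x k) - f(Δ k) = 0` for `k = 1, ..., N`, with `Δ 0 = Δ N`. -/
def CircleFixedB (a L : ℝ) (F : ℝ → ℝ) (N : ℕ) (x : ℕ → ℝ) : Prop :=
  CircleConfigB L N x ∧
  ∀ k, 1 ≤ k → k ≤ N →
    fpow a (cgap L N x (if k = 1 then N else k - 1)) + F (x k) - fpow a (cgap L N x k) = 0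

/-- A fixed configuration of `N` particles on the segment `[0, L]` with constant
force `F`, completely inelastic boundary conditions, and `x 1 = 0`, `x N = L`. -/
def SegmentFixed (a L F : ℝ) (N : ℕ) (x : ℕ → ℝ) : Prop :=
  x 1 = 0 ∧ x N = L ∧ (∀ k, 1 ≤ k → k < N → x k < x (k + 1)) ∧
  (∀ k, 2 ≤ k → k ≤ N - 1 → fpow a (x k - x (k - 1)) + F - fpow a (x (k + 1) - x k) = 0) ∧
  F - fpow a (x 2) ≤ 0 ∧ 0 ≤ F + fpow a (L - x (N - 1))

private lemma hasDerivAt_one_add_rpow (p v : ℝ) (h : (0:ℝ) < 1 + v) :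
    HasDerivAt (fun t : ℝ => (1+t) ^ p) (p * (1+v)^(p-1)) v := by
  have h1 : HasDerivAt (fun t : ℝ => 1 + t) 1 v := (hasDerivAt_id v).const_add 1
  have h2 : HasDerivAt (fun y : ℝ => y ^ p) (p * (1+v)^(p-1)) (1+v) :=
    Real.hasDerivAt_rpow_const (Or.inl h.ne')
  simpa [Function.comp_def] using h2.comp v h1

private lemma rpow_bound_half (p t : ℝ) (hp : p ≤ 0) (ht : |t| ≤ 1/2) :
    (1+t) ^ p ≤ 2 ^ (-p) := by
  have h1 : (1:ℝ)/2 ≤ 1 + t := by have := (abs_le.1 ht).1; linarith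
  have h2 : (1+t) ^ p ≤ ((1:ℝ)/2) ^ p :=
    Real.rpow_le_rpow_of_nonpos (by norm_num) h1 hp
  have h3 : ((1:ℝ)/2) ^ p = 2 ^ (-p) := by
    rw [Real.rpow_neg (by norm_num : (0:ℝ) ≤ 2), one_div, Real.inv_rpow (by norm_num : (0:ℝ) ≤ 2)]
  linarith [h2, h3.le, h3.ge]

private lemma mem_uIcc_abs_le {u v : ℝ} (hu : u ∈ Set.uIcc 0 v) : |u| ≤ |v| := by
  rcases Set.mem_uIcc.1 hu with ⟨h1, h2⟩ | ⟨h1, h2⟩ <;>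
    rw [abs_le] <;> cases' abs_le.1 (le_refl |v|) with hv1 hv2 <;>
    constructor <;> nlinarith [neg_abs_le v, le_abs_self v]

private lemma taylor3 (b : ℝ) (hb : 0 < b) : ∃ K : ℝ, 0 < K ∧ ∀ v : ℝ, |v| ≤ 1/2 →
    |(1+v)^(-b) - (1 - b*v + (b*(b+1)/2)*v^2)| ≤ K * |v|^3 := by
  set K : ℝ := b*(b+1)*(b+2)*2^(b+3) with hK
  have hKpos : 0 < K := by
    have : (0:ℝ) < 2^(b+3) := Real.rpow_pos_of_pos (by norm_num) _
    positivity
  refine ⟨K, hKpos, ?_⟩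
  set φ₂ : ℝ → ℝ := fun t => b*(b+1)*(1+t)^(-b-2) - b*(b+1) with hφ₂
  set φ₁ : ℝ → ℝ := fun t => -b*(1+t)^(-b-1) + b - b*(b+1)*t with hφ₁
  set φ₀ : ℝ → ℝ := fun t => (1+t)^(-b) - (1 - b*t + (b*(b+1)/2)*t^2) with hφ₀
  have hpos : ∀ t : ℝ, |t| ≤ 1/2 → (0:ℝ) < 1 + t := by
    intro t ht; have := (abs_le.1 ht).1; linarith
  -- Step A : |φ₂ t| ≤ K * |t| on |t| ≤ 1/2
  have stepA : ∀ t : ℝ, |t| ≤ 1/2 → |φ₂ t| ≤ K * |t| := by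
    intro t ht
    have hder : ∀ u ∈ Set.Icc (-(1/2):ℝ) (1/2),
        HasDerivWithinAt (fun s => b*(b+1)*(1+s)^(-b-2))
          (b*(b+1)*((-b-2) * (1+u)^(-b-2-1))) (Set.Icc (-(1/2):ℝ) (1/2)) u := by
      intro u hu
      have hu' : |u| ≤ 1/2 := abs_le.2 ⟨hu.1, hu.2⟩
      exact (((hasDerivAt_one_add_rpow (-b-2) u (hpos u hu')).const_mul
        (b*(b+1))).hasDerivWithinAt)
    have hbound : ∀ u ∈ Set.Icc (-(1/2):ℝ) (1/2),
        ‖b*(b+1)*((-b-2) * (1+u)^(-b-2-1))‖ ≤ K := by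
      intro u hu
      have hu' : |u| ≤ 1/2 := abs_le.2 ⟨hu.1, hu.2⟩
      have h1 : (0:ℝ) < 1 + u := hpos u hu'
      have h2 : (1+u) ^ (-b-2-1) ≤ 2 ^ (b+3) := by
        have := rpow_bound_half (-b-2-1) u (by linarith) hu'
        simpa [show -(-b-2-1) = b+3 by ring] using this
      rw [Real.norm_eq_abs, abs_mul, abs_mul, abs_mul]
      have h3 : |(1+u) ^ (-b-2-1)| = (1+u) ^ (-b-2-1) :=
        abs_of_pos (Real.rpow_pos_of_pos h1 _)
      have h4 : |b| = b := abs_of_pos hb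
      have h4' : |b+1| = b+1 := abs_of_pos (by linarith)
      have h5 : |(-b-2)| = b + 2 := by rw [abs_of_neg (by linarith)]; ring
      rw [h3, h4, h4', h5, hK]
      have h6 : (0:ℝ) ≤ b*(b+1)*(b+2) := by positivity
      nlinarith [Real.rpow_pos_of_pos h1 (-b-2-1), Real.rpow_pos_of_pos (show (0:ℝ)<2 by norm_num) (b+3)]
    have hmem0 : (0:ℝ) ∈ Set.Icc (-(1/2):ℝ) (1/2) := by constructor <;> norm_num
    have hmemt : t ∈ Set.Icc (-(1/2):ℝ) (1/2) := ⟨(abs_le.1 ht).1, (abs_le.1 ht).2⟩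
    have := Convex.norm_image_sub_le_of_norm_hasDerivWithin_le hder hbound
      (convex_Icc _ _) hmem0 hmemt
    have h0 : b*(b+1)*(1+(0:ℝ))^(-b-2) = b*(b+1) := by
      norm_num
    simpa [Real.norm_eq_abs, φ₂, h0] using this
  -- Step B : |φ₁ v| ≤ K * |v|^2
  have stepB : ∀ v : ℝ, |v| ≤ 1/2 → |φ₁ v| ≤ K * |v|^2 := by
    intro v hv
    have hder : ∀ u ∈ Set.uIcc (0:ℝ) v,
        HasDerivWithinAt φ₁ (φ₂ u) (Set.uIcc (0:ℝ) v) u := by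
      intro u hu
      have hu' : |u| ≤ 1/2 := le_trans (mem_uIcc_abs_le hu) hv
      have h1 := (hasDerivAt_one_add_rpow (-b-1) u (hpos u hu')).const_mul (-b)
      have h2 : HasDerivAt (fun t : ℝ => -b*(1+t)^(-b-1) + b - b*(b+1)*t)
          (-b * ((-b-1) * (1+u)^(-b-1-1)) - b*(b+1)) u := by
        simpa [Pi.sub_def] using ((h1.add_const b).sub ((hasDerivAt_id u).const_mul (b*(b+1))))
      have heq : -b * ((-b-1) * (1+u)^(-b-1-1)) - b*(b+1) = φ₂ u := by
        rw [hφ₂]; ring_nf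
      rw [heq] at h2
      exact h2.hasDerivWithinAt
    have hbound : ∀ u ∈ Set.uIcc (0:ℝ) v, ‖φ₂ u‖ ≤ K * |v| := by
      intro u hu
      have h1 : |u| ≤ |v| := mem_uIcc_abs_le hu
      have h2 := stepA u (le_trans h1 hv)
      rw [Real.norm_eq_abs]
      nlinarith
    have hmem0 : (0:ℝ) ∈ Set.uIcc (0:ℝ) v := Set.left_mem_uIcc
    have hmemv : v ∈ Set.uIcc (0:ℝ) v := Set.right_mem_uIcc
    have := Convex.norm_image_sub_le_of_norm_hasDerivWithin_le hder hbound
      (convex_uIcc _ _) hmem0 hmemv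
    have h0 : φ₁ 0 = 0 := by simp [hφ₁]
    have h2 : |φ₁ v| ≤ K * |v| * |v| := by
      simpa [Real.norm_eq_abs, h0] using this
    nlinarith [abs_nonneg (φ₁ v)]
  -- Step C : |φ₀ v| ≤ K * |v|^3
  intro v hv
  have hder : ∀ u ∈ Set.uIcc (0:ℝ) v,
      HasDerivWithinAt φ₀ (φ₁ u) (Set.uIcc (0:ℝ) v) u := by
    intro u hu
    have hu' : |u| ≤ 1/2 := le_trans (mem_uIcc_abs_le hu) hv
    have h1 := hasDerivAt_one_add_rpow (-b) u (hpos u hu')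
    have hpoly : HasDerivAt (fun t : ℝ => 1 - b*t + (b*(b+1)/2)*t^2)
        (-b + (b*(b+1))*u) u := by
      have := ((hasDerivAt_pow 2 u).const_mul (b*(b+1)/2))
      have h3 := ((hasDerivAt_id u).const_mul b).const_sub 1
      simpa [Pi.add_def] using (h3.add this).congr_deriv (by push_cast; ring)
    have h2 := h1.sub hpoly
    have heq : -b * (1+u)^(-b-1) - (-b + (b*(b+1))*u) = φ₁ u := by rw [hφ₁]; ring
    have h4 : HasDerivAt φ₀ (φ₁ u) u := by
      rw [← heq]; exact h2
    exact h4.hasDerivWithinAt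
  have hbound : ∀ u ∈ Set.uIcc (0:ℝ) v, ‖φ₁ u‖ ≤ K * |v|^2 := by
    intro u hu
    have h1 : |u| ≤ |v| := mem_uIcc_abs_le hu
    have h2 := stepB u (le_trans h1 hv)
    rw [Real.norm_eq_abs]
    have h3 : |u|^2 ≤ |v|^2 := by nlinarith [abs_nonneg u, abs_nonneg v]
    exact h2.trans (mul_le_mul_of_nonneg_left h3 hKpos.le)
  have := Convex.norm_image_sub_le_of_norm_hasDerivWithin_le hder hbound
    (convex_uIcc _ _) (Set.left_mem_uIcc) (Set.right_mem_uIcc)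
  have h0 : φ₀ 0 = 0 := by simp [hφ₀]
  have h2 : |φ₀ v| ≤ K * |v|^2 * |v| := by
    simpa [Real.norm_eq_abs, h0] using this
  calc |(1+v)^(-b) - (1 - b*v + (b*(b+1)/2)*v^2)| = |φ₀ v| := rfl
    _ ≤ K * |v|^2 * |v| := h2
    _ = K * |v|^3 := by ring


private lemma sum_S1 (M : ℕ) : ∑ k ∈ Finset.Icc 1 M, ((k:ℝ)-1) = (M:ℝ)*((M:ℝ)-1)/2 := by
  induction M with
  | zero => simp
  | succ n ih =>
    rw [Finset.sum_Icc_succ_top (by omega), ih]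
    push_cast; ring

private lemma sum_S2 (M : ℕ) : ∑ k ∈ Finset.Icc 1 M, ((k:ℝ)-1)^2
    = ((M:ℝ)-1)*(M:ℝ)*(2*(M:ℝ)-1)/6 := by
  induction M with
  | zero => simp
  | succ n ih =>
    rw [Finset.sum_Icc_succ_top (by omega), ih]
    push_cast; ring

set_option maxHeartbeats 2000000 in
private lemma core (b : ℝ) (hb : 0 < b) :
    ∃ C : ℝ, 0 < C ∧ ∃ ε : ℝ, 0 < ε ∧ ε ≤ 1/2 ∧ ∀ (M : ℕ) (q : ℝ) (v : ℕ → ℝ),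
      2 ≤ M → 0 < q →
      (∀ k ∈ Finset.Icc 1 M, v k = v 1 + ((k:ℝ)-1)*q) →
      (∀ k ∈ Finset.Icc 1 M, |v k| ≤ (M:ℝ)*q) →
      (∑ k ∈ Finset.Icc 1 M, ((1+v k)^(-b) - 1)) = 0 →
      (M:ℝ)*q ≤ ε →
      |((1+v M)^(-b) - 1) + b*q*((M:ℝ)-1)/2 - (b*(b+1)/12)*q^2*((M:ℝ)-1)*((M:ℝ)-2)|
        ≤ C * ((M:ℝ)*q)^3 := by
  obtain ⟨K, hK, htay⟩ := taylor3 b hb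
  set K₁ : ℝ := (b*(b+1)/12 + K)/b with hK₁
  have hK₁pos : 0 < K₁ := by rw [hK₁]; positivity
  refine ⟨2*K + (b*(b+1)/2)*K₁, by positivity,
    min (1/2) (1/(2*(b+1))), by positivity, min_le_left _ _, ?_⟩
  intro M q v hM hq hlin habs hsum hsmall
  set p : ℝ := (M:ℝ)*q with hp
  have hMR : (2:ℝ) ≤ (M:ℝ) := by exact_mod_cast hM
  have hMpos : (0:ℝ) < (M:ℝ) := by linarith
  have hppos : 0 < p := by rw [hp]; positivity
  have hphalf : p ≤ 1/2 := le_trans hsmall (min_le_left _ _)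
  have hp1 : p ≤ 1 := by linarith
  have hpb : p * (2*(b+1)) ≤ 1 := by
    have h1 : p ≤ 1/(2*(b+1)) := le_trans hsmall (min_le_right _ _)
    rw [← le_div_iff₀ (by positivity)]; exact h1
  -- φ values
  set φ : ℕ → ℝ := fun k => (1+v k)^(-b) - (1 - b*(v k) + (b*(b+1)/2)*(v k)^2) with hφ
  have hφbound : ∀ k ∈ Finset.Icc 1 M, |φ k| ≤ K * p^3 := by
    intro k hk
    have h1 : |v k| ≤ p := habs k hk
    have h2 : |v k| ≤ 1/2 := le_trans h1 hphalf
    have h4 : |v k|^3 ≤ p^3 := pow_le_pow_left₀ (abs_nonneg _) h1 3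
    calc |φ k| ≤ K * |v k|^3 := htay (v k) h2
      _ ≤ K * p^3 := by nlinarith
  have hMmem : M ∈ Finset.Icc 1 M := by simp; omega
  have h1mem : (1:ℕ) ∈ Finset.Icc 1 M := by simp; omega
  set η : ℝ := v 1 + q*((M:ℝ)-1)/2 with hη
  have hcard : (Finset.Icc 1 M).card = M := by rw [Nat.card_Icc]; omega
  -- sum of v
  have hsv : ∑ k ∈ Finset.Icc 1 M, v k = (M:ℝ) * η := by
    rw [Finset.sum_congr rfl hlin, Finset.sum_add_distrib, Finset.sum_const, hcard,
      ← Finset.sum_mul, sum_S1, hη]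
    ring
  -- sum of v^2
  have hsv2 : ∑ k ∈ Finset.Icc 1 M, (v k)^2
      = (M:ℝ)*η^2 + q^2 * ((M:ℝ)*((M:ℝ)^2-1))/12 := by
    have h1 : ∀ k ∈ Finset.Icc 1 M, (v k)^2
        = q^2*((k:ℝ)-1)^2 + (2*η*q - q^2*((M:ℝ)-1))*((k:ℝ)-1)
          + (η - q*((M:ℝ)-1)/2)^2 := by
      intro k hk
      have h3 : v k = η - q*((M:ℝ)-1)/2 + ((k:ℝ)-1)*q := by
        rw [hlin k hk, hη]; ring
      rw [h3]; ring
    rw [Finset.sum_congr rfl h1, Finset.sum_add_distrib, Finset.sum_add_distrib,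
      Finset.sum_const, hcard, ← Finset.mul_sum, ← Finset.mul_sum, sum_S1, sum_S2]
    ring
  -- main equation
  set Sφ : ℝ := ∑ k ∈ Finset.Icc 1 M, φ k with hSφdef
  have hmain : b * ((M:ℝ)*η)
      = (b*(b+1)/2) * ((M:ℝ)*η^2 + q^2 * ((M:ℝ)*((M:ℝ)^2-1))/12) + Sφ := by
    have h1 : ∀ k ∈ Finset.Icc 1 M, (1+v k)^(-b) - 1
        = -b*(v k) + (b*(b+1)/2)*(v k)^2 + φ k := by
      intro k _; simp only [hφ]; ring
    have h2 := hsum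
    rw [Finset.sum_congr rfl h1, Finset.sum_add_distrib, Finset.sum_add_distrib,
      ← Finset.mul_sum, ← Finset.mul_sum, hsv, hsv2] at h2
    linarith
  have hSφ : |Sφ| ≤ (M:ℝ) * (K * p^3) := by
    calc |Sφ| ≤ ∑ k ∈ Finset.Icc 1 M, |φ k| := Finset.abs_sum_le_sum_abs _ _
      _ ≤ ∑ _k ∈ Finset.Icc 1 M, K * p^3 := Finset.sum_le_sum hφbound
      _ = (M:ℝ) * (K * p^3) := by rw [Finset.sum_const, hcard, nsmul_eq_mul]
  have heta : b * η = (b*(b+1)/2)*η^2 + (b*(b+1)/2)*q^2*((M:ℝ)^2-1)/12 + Sφ/(M:ℝ) := by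
    have hMne : (M:ℝ) ≠ 0 := ne_of_gt hMpos
    have h4 : Sφ/(M:ℝ)*(M:ℝ) = Sφ := div_mul_cancel₀ _ hMne
    apply mul_left_cancel₀ hMne
    linear_combination hmain - h4
  have hSφM : |Sφ/(M:ℝ)| ≤ K * p^3 := by
    rw [abs_div, abs_of_pos hMpos, div_le_iff₀ hMpos]
    calc |Sφ| ≤ (M:ℝ) * (K * p^3) := hSφ
      _ = K * p^3 * (M:ℝ) := by ring
  -- crude bound on η
  have hv1 : |v 1| ≤ p := habs 1 h1mem
  have hscrude : |q*((M:ℝ)-1)/2| ≤ p/2 := by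
    have h9 : (0:ℝ) ≤ (M:ℝ)-1 := by linarith
    rw [abs_of_nonneg (div_nonneg (mul_nonneg hq.le h9) (by norm_num)), hp]
    nlinarith [hq.le]
  have hηcrude : |η| ≤ 2*p := by
    rw [hη]
    calc |v 1 + q*((M:ℝ)-1)/2| ≤ |v 1| + |q*((M:ℝ)-1)/2| := abs_add_le _ _
      _ ≤ 2*p := by linarith
  -- refined bound on η
  have hη1 : |η| ≤ K₁ * p^2 := by
    have t1 : |(b*(b+1)/2)*η^2| = (b*(b+1)/2)*η^2 := abs_of_nonneg (by positivity)
    have t0 : (0:ℝ) ≤ (M:ℝ)^2 - 1 := by nlinarith [hMR]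
    have t2a : q^2*((M:ℝ)^2-1) ≤ p^2 := by rw [hp]; nlinarith [sq_nonneg q]
    have t2 : |(b*(b+1)/2)*q^2*((M:ℝ)^2-1)/12| ≤ (b*(b+1)/2)*p^2/12 := by
      rw [abs_of_nonneg (by
        apply div_nonneg _ (by norm_num : (0:ℝ) ≤ 12)
        exact mul_nonneg (mul_nonneg (by positivity) (sq_nonneg q)) t0)]
      have t2b := mul_le_mul_of_nonneg_left t2a (show (0:ℝ) ≤ b*(b+1)/2 by positivity)
      linarith
    have e1 : b*|η| ≤ (b*(b+1)/2)*η^2 + (b*(b+1)/2)*p^2/12 + K*p^3 := by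
      have a1 : |b*η| = b*|η| := by rw [abs_mul, abs_of_pos hb]
      have a3 := abs_add_le ((b*(b+1)/2)*η^2 + (b*(b+1)/2)*q^2*((M:ℝ)^2-1)/12) (Sφ/(M:ℝ))
      have a4 := abs_add_le ((b*(b+1)/2)*η^2) ((b*(b+1)/2)*q^2*((M:ℝ)^2-1)/12)
      have a2 : |b*η| ≤ |(b*(b+1)/2)*η^2| + |(b*(b+1)/2)*q^2*((M:ℝ)^2-1)/12|
          + |Sφ/(M:ℝ)| := by
        rw [heta]
        linarith
      rw [a1] at a2
      linarith
    have e2 : η^2 ≤ 2*p*|η| := by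
      have := mul_le_mul_of_nonneg_right hηcrude (abs_nonneg η)
      nlinarith [sq_abs η]
    have e3 : (b*(b+1)/2)*η^2 ≤ (b/2)*|η| := by
      have e3a := mul_le_mul_of_nonneg_left e2 (show (0:ℝ) ≤ b*(b+1)/2 by positivity)
      have e3b := mul_nonneg (mul_nonneg hb.le (abs_nonneg η))
        (show (0:ℝ) ≤ 1 - p*(2*(b+1)) by linarith)
      nlinarith [e3a, e3b]
    have e4 : K*p^3 ≤ (K/2)*p^2 := by
      nlinarith [mul_nonneg (mul_nonneg hK.le (sq_nonneg p))
        (show (0:ℝ) ≤ 1/2 - p by linarith)]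
    have hbK₁ : b*K₁ = b*(b+1)/12 + K := by rw [hK₁]; field_simp
    nlinarith [e1, e3, e4]
  -- the exact identity
  have hvM : v M = η + q*((M:ℝ)-1)/2 := by
    have h1 := hlin M hMmem
    rw [h1, hη]; ring
  have h1 : (1+v M)^(-b)
      = 1 - b*(η + q*((M:ℝ)-1)/2) + (b*(b+1)/2)*(η + q*((M:ℝ)-1)/2)^2 + φ M := by
    have : φ M = (1+v M)^(-b) - (1 - b*(v M) + (b*(b+1)/2)*(v M)^2) := by simp only [hφ]
    rw [this, hvM]; ring
  have hexpr : (1+v M)^(-b) - 1 + b*q*((M:ℝ)-1)/2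
        - (b*(b+1)/12)*q^2*((M:ℝ)-1)*((M:ℝ)-2)
      = -(Sφ/(M:ℝ)) + (b*(b+1))*(q*((M:ℝ)-1)/2)*η + φ M := by
    rw [h1]
    linear_combination -heta
  rw [hexpr]
  have b1 : |(b*(b+1))*(q*((M:ℝ)-1)/2)*η| ≤ (b*(b+1)/2)*K₁*p^3 := by
    rw [abs_mul, abs_mul, abs_of_pos (by positivity : (0:ℝ) < b*(b+1))]
    have m := mul_le_mul hscrude hη1 (abs_nonneg η) (by positivity : (0:ℝ) ≤ p/2)
    nlinarith [mul_le_mul_of_nonneg_left m (show (0:ℝ) ≤ b*(b+1) by positivity)]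
  have b2 : |φ M| ≤ K * p^3 := hφbound M hMmem
  calc |-(Sφ/(M:ℝ)) + (b*(b+1))*(q*((M:ℝ)-1)/2)*η + φ M|
      ≤ |-(Sφ/(M:ℝ)) + (b*(b+1))*(q*((M:ℝ)-1)/2)*η| + |φ M| := abs_add_le _ _
    _ ≤ |Sφ/(M:ℝ)| + |(b*(b+1))*(q*((M:ℝ)-1)/2)*η| + |φ M| := by
        have := abs_add_le (-(Sφ/(M:ℝ))) ((b*(b+1))*(q*((M:ℝ)-1)/2)*η)
        rw [abs_neg] at this; linarith
    _ ≤ K*p^3 + (b*(b+1)/2)*K₁*p^3 + K*p^3 := by linarith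
    _ = (2*K + (b*(b+1)/2)*K₁) * p^3 := by ring

private lemma rpow_neg_le_rev {a u w : ℝ} (ha : 0 < a) (hu : 0 < u) (hw : 0 < w)
    (h : u^(-a) ≤ w^(-a)) : w ≤ u := by
  by_contra h'
  push_neg at h'
  have h1 : u^a < w^a := Real.rpow_lt_rpow hu.le h' ha
  have h2 : (w^a)⁻¹ < (u^a)⁻¹ :=
    inv_strictAnti₀ (Real.rpow_pos_of_pos hu a) h1
  rw [Real.rpow_neg hu.le, Real.rpow_neg hw.le] at h
  linarith

set_option maxHeartbeats 1000000 in
private lemma segment_props (a L F : ℝ) (ha : 1 < a) (hL : 0 < L) (hF : 0 < F)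
    (M : ℕ) (x : ℕ → ℝ) (hM : 2 ≤ M) (hsf : SegmentFixed a L F (M+1) x) :
    (∀ k ∈ Finset.Icc 1 M, (L/(M:ℝ))^a * (x (k+1) - x k)^(-a) - 1
        = ((L/(M:ℝ))^a * (x (1+1) - x 1)^(-a) - 1) + ((k:ℝ)-1)*((L/(M:ℝ))^a * F)) ∧
    (∀ k ∈ Finset.Icc 1 M, |(L/(M:ℝ))^a * (x (k+1) - x k)^(-a) - 1|
        ≤ (M:ℝ)*((L/(M:ℝ))^a * F)) ∧
    (∑ k ∈ Finset.Icc 1 M,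
      ((1+((L/(M:ℝ))^a * (x (k+1) - x k)^(-a) - 1))^(-(a⁻¹)) - 1)) = 0 ∧
    (1+((L/(M:ℝ))^a * (x (M+1) - x M)^(-a) - 1))^(-(a⁻¹)) - 1
      = (x (M+1) - x M)*((M:ℝ))/L - 1 := by
  obtain ⟨hx1, hxN, hmono, hrec, -, -⟩ := hsf
  have hMpos : (0:ℝ) < (M:ℝ) := by positivity
  have hapos : (0:ℝ) < a := by linarith
  set Δ : ℕ → ℝ := fun k => x (k+1) - x k with hΔ
  have hΔpos : ∀ k ∈ Finset.Icc 1 M, 0 < Δ k := by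
    intro k hk
    simp only [Finset.mem_Icc] at hk
    have := hmono k hk.1 (by omega)
    simp only [hΔ]; linarith
  -- recursion
  have hrec' : ∀ k ∈ Finset.Icc 1 M, (Δ k)^(-a) = (Δ 1)^(-a) + ((k:ℝ)-1)*F := by
    intro k hk
    simp only [Finset.mem_Icc] at hk
    obtain ⟨hk1, hk2⟩ := hk
    induction k with
    | zero => omega
    | succ n ih =>
      rcases Nat.eq_or_lt_of_le hk1 with h1 | h1
      · simp [← h1]
      · have hn1 : 1 ≤ n := by omega
        have hn2 : n ≤ M := by omega
        have ihn := ih hn1 hn2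
        have hr := hrec (n+1) (by omega) (by omega)
        simp only [fpow, Nat.add_sub_cancel] at hr
        have : Δ (n+1) ^ (-a) = Δ n ^ (-a) + F := by
          simp only [hΔ]; linarith
        rw [this, ihn]
        push_cast; ring
  -- telescoping sum
  have hsumΔ : ∑ k ∈ Finset.Icc 1 M, Δ k = L := by
    have h1 : ∑ k ∈ Finset.Icc 1 M, Δ k = ∑ i ∈ Finset.range M, Δ (1+i) := by
      rw [← Finset.Ico_add_one_right_eq_Icc, Finset.sum_Ico_eq_sum_range]
      simp
    have h2 : ∑ i ∈ Finset.range M, Δ (1+i)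
        = ∑ i ∈ Finset.range M, ((fun j => x (j+1)) (i+1) - (fun j => x (j+1)) i) := by
      apply Finset.sum_congr rfl
      intro i _
      simp only [hΔ, add_comm]
    rw [h1, h2, Finset.sum_range_sub (fun j => x (j+1)) M]
    simp [hx1, hxN]
  -- antitone
  have hdec : ∀ j ∈ Finset.Icc 1 M, ∀ k ∈ Finset.Icc 1 M, j ≤ k → Δ k ≤ Δ j := by
    intro j hj k hk hjk
    have h1 : (Δ j)^(-a) ≤ (Δ k)^(-a) := by
      rw [hrec' j hj, hrec' k hk]
      have : (j:ℝ) ≤ (k:ℝ) := by exact_mod_cast hjk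
      nlinarith
    exact rpow_neg_le_rev hapos (hΔpos j hj) (hΔpos k hk) h1
  have h1mem : (1:ℕ) ∈ Finset.Icc 1 M := by simp; omega
  have hMmem : M ∈ Finset.Icc 1 M := by simp; omega
  have hcard : (Finset.Icc 1 M).card = M := by rw [Nat.card_Icc]; omega
  -- extremes vs average
  have hΔ1 : L ≤ (M:ℝ) * Δ 1 := by
    rw [← hsumΔ]
    calc ∑ k ∈ Finset.Icc 1 M, Δ k ≤ ∑ k ∈ Finset.Icc 1 M, Δ 1 := by
          apply Finset.sum_le_sum
          intro k hk
          exact hdec 1 h1mem k hk (by simp only [Finset.mem_Icc] at hk; omega)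
      _ = (M:ℝ) * Δ 1 := by rw [Finset.sum_const, hcard, nsmul_eq_mul]
  have hΔM : (M:ℝ) * Δ M ≤ L := by
    rw [← hsumΔ]
    calc (M:ℝ) * Δ M = ∑ k ∈ Finset.Icc 1 M, Δ M := by
          rw [Finset.sum_const, hcard, nsmul_eq_mul]
      _ ≤ ∑ k ∈ Finset.Icc 1 M, Δ k := by
          apply Finset.sum_le_sum
          intro k hk
          exact hdec k hk M hMmem (by simp only [Finset.mem_Icc] at hk; omega)
  set h : ℝ := L/(M:ℝ) with hh
  have hhpos : 0 < h := by rw [hh]; positivity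
  have hhΔ1 : h ≤ Δ 1 := by rw [hh, div_le_iff₀ hMpos]; linarith
  have hΔMh : Δ M ≤ h := by rw [hh, le_div_iff₀ hMpos]; linarith
  have hΔ1pos := hΔpos 1 h1mem
  have hΔMpos := hΔpos M hMmem
  have hr1 : (Δ 1)^(-a) ≤ h^(-a) :=
    Real.rpow_le_rpow_of_nonpos hhpos hhΔ1 (by linarith)
  have hrM : h^(-a) ≤ (Δ M)^(-a) :=
    Real.rpow_le_rpow_of_nonpos hΔMpos hΔMh (by linarith)
  have hha : (0:ℝ) < h^a := Real.rpow_pos_of_pos hhpos a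
  have hcancel : h^a * h^(-a) = 1 := by
    rw [← Real.rpow_add hhpos]; simp
  -- bound (iii)
  have hiii : ∀ k ∈ Finset.Icc 1 M, |h^a * (Δ k)^(-a) - 1| ≤ (M:ℝ)*(h^a * F) := by
    intro k hk
    have hk' := hk
    simp only [Finset.mem_Icc] at hk'
    have e1 := hrec' k hk
    have e2 := hrec' M hMmem
    have hkR : (1:ℝ) ≤ (k:ℝ) := by exact_mod_cast hk'.1
    have hkR2 : (k:ℝ) ≤ (M:ℝ) := by exact_mod_cast hk'.2
    rw [abs_le]
    constructor
    · -- lower: Δk^{-a} ≥ Δ1^{-a} ≥ ΔM^{-a} - (M-1)F ≥ h^{-a} - (M-1)F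
      have l1 : (Δ 1)^(-a) = (Δ M)^(-a) - ((M:ℝ)-1)*F := by rw [e2]; ring
      have l2 : (Δ k)^(-a) ≥ h^(-a) - ((M:ℝ)-1)*F := by
        rw [e1, l1]
        nlinarith
      nlinarith [mul_le_mul_of_nonneg_left l2 hha.le]
    · have l2 : (Δ k)^(-a) ≤ h^(-a) + ((M:ℝ)-1)*F := by
        rw [e1]
        nlinarith
      nlinarith [mul_le_mul_of_nonneg_left l2 hha.le]
  -- gap formula
  have hgap : ∀ k ∈ Finset.Icc 1 M,
      (1+(h^a * (Δ k)^(-a) - 1))^(-(a⁻¹)) = Δ k / h := by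
    intro k hk
    have hΔk := hΔpos k hk
    have hΔka : (0:ℝ) < (Δ k)^(-a) := Real.rpow_pos_of_pos hΔk _
    have e1 : 1+(h^a * (Δ k)^(-a) - 1) = h^a * (Δ k)^(-a) := by ring
    rw [e1, Real.mul_rpow hha.le hΔka.le]
    have e2 : (h^a)^(-(a⁻¹)) = h⁻¹ := by
      rw [← Real.rpow_mul hhpos.le]
      rw [show a * -(a⁻¹) = -1 by field_simp]
      exact Real.rpow_neg_one h
    have e3 : ((Δ k)^(-a))^(-(a⁻¹)) = Δ k := by
      rw [← Real.rpow_mul hΔk.le]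
      rw [show (-a) * -(a⁻¹) = 1 by field_simp]
      exact Real.rpow_one _
    rw [e2, e3]
    ring
  refine ⟨?_, ?_, ?_, ?_⟩
  · intro k hk
    have := hrec' k hk
    have e1 : x (1+1) - x 1 = Δ 1 := by simp [hΔ]
    rw [e1, this]
    ring
  · exact hiii
  · have e1 : ∀ k ∈ Finset.Icc 1 M,
        (1+(h^a * (Δ k)^(-a) - 1))^(-(a⁻¹)) - 1 = Δ k / h - 1 := by
      intro k hk; rw [hgap k hk]
    rw [Finset.sum_congr rfl e1, Finset.sum_sub_distrib, ← Finset.sum_div, hsumΔ,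
      Finset.sum_const, hcard, nsmul_eq_mul, mul_one, hh]
    field_simp
    simp
  · rw [hgap M hMmem, hh]
    have : Δ M = x (M+1) - x M := rfl
    rw [this]
    field_simp

set_option maxHeartbeats 1000000 in
/-- Asymptotic expansion of `δ (N-1)` for the fixed configurations on `[0, L]`:
with `Δ k = (L/(N-1)) (1 + δ k)` and `q = (L/(N-1))^a F`,
`δ (N-1) = -a⁻¹ q (N/2 - 1) + (a⁻¹(a⁻¹+1)/12) q² (N-2)(N-3) + o(N^{-2a+2})`. -/
theorem delta_last_expansion (a L F : ℝ) (ha : 1 < a) (hL : 0 < L) (hF : 0 < F)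
    (N₀ : ℕ) (x : ℕ → ℕ → ℝ) (hx : ∀ N ≥ N₀, SegmentFixed a L F N (x N)) :
    (fun N : ℕ =>
        ((x N N - x N (N - 1)) * ((N : ℝ) - 1) / L - 1)
          + a⁻¹ * ((L / ((N : ℝ) - 1)) ^ a * F) * ((N : ℝ) / 2 - 1)
          - (a⁻¹ * (a⁻¹ + 1) / 12) * ((L / ((N : ℝ) - 1)) ^ a * F) ^ 2
              * ((N : ℝ) - 2) * ((N : ℝ) - 3))
      =o[atTop] (fun N : ℕ => (N : ℝ) ^ (-2 * a + 2)) := by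
  have hb : 0 < a⁻¹ := inv_pos.2 (by linarith)
  obtain ⟨C, hC, ε, hε, hεhalf, hcore⟩ := core a⁻¹ hb
  set f : ℕ → ℝ := fun N : ℕ =>
        ((x N N - x N (N - 1)) * ((N : ℝ) - 1) / L - 1)
          + a⁻¹ * ((L / ((N : ℝ) - 1)) ^ a * F) * ((N : ℝ) / 2 - 1)
          - (a⁻¹ * (a⁻¹ + 1) / 12) * ((L / ((N : ℝ) - 1)) ^ a * F) ^ 2
              * ((N : ℝ) - 2) * ((N : ℝ) - 3) with hf
  -- the product (N-1) * q N, rewritten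
  have hmq : ∀ N : ℕ, 2 ≤ N →
      ((N:ℝ)-1) * ((L / ((N:ℝ)-1)) ^ a * F) = L^a * F * ((N:ℝ)-1)^(1-a) := by
    intro N hN
    have hm : (0:ℝ) < (N:ℝ)-1 := by
      have : (2:ℝ) ≤ (N:ℝ) := by exact_mod_cast hN
      linarith
    rw [Real.div_rpow hL.le hm.le, Real.rpow_sub hm, Real.rpow_one]
    field_simp
  -- eventual smallness
  have htendm : Tendsto (fun N : ℕ => (N:ℝ)-1) atTop atTop :=
    tendsto_atTop_add_const_right _ (-1) tendsto_natCast_atTop_atTop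
  have htend0 : Tendsto (fun N : ℕ => L^a * F * ((N:ℝ)-1)^(1-a)) atTop (nhds 0) := by
    have h1 : Tendsto (fun N : ℕ => ((N:ℝ)-1)^(-(a-1))) atTop (nhds 0) :=
      (tendsto_rpow_neg_atTop (by linarith : (0:ℝ) < a-1)).comp htendm
    have h2 := h1.const_mul (L^a * F)
    rw [mul_zero] at h2
    convert h2 using 2 with N
    ring_nf
  have hsmallev : ∀ᶠ N : ℕ in atTop, ((N:ℝ)-1) * ((L / ((N:ℝ)-1)) ^ a * F) ≤ ε := by
    have h1 : ∀ᶠ N : ℕ in atTop, L^a * F * ((N:ℝ)-1)^(1-a) < ε :=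
      htend0.eventually_lt_const hε
    filter_upwards [h1, eventually_ge_atTop 2] with N h2 h3
    rw [hmq N h3]
    exact h2.le
  -- eventual per-N bound
  have hbound : ∀ᶠ N : ℕ in atTop,
      |f N| ≤ C * (((N:ℝ)-1) * ((L / ((N:ℝ)-1)) ^ a * F))^3 := by
    filter_upwards [eventually_ge_atTop N₀, eventually_ge_atTop 3, hsmallev]
      with N hN₀ hN3 hsm
    set M : ℕ := N - 1 with hM
    have hNM : N = M + 1 := by omega
    have hM2 : 2 ≤ M := by omega
    have hcast : ((M:ℕ):ℝ) = (N:ℝ)-1 := by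
      rw [hNM]; push_cast; ring
    have hsf : SegmentFixed a L F (M+1) (x N) := by rw [← hNM]; exact hx N hN₀
    obtain ⟨p1, p2, p3, p4⟩ := segment_props a L F ha hL hF M (x N) hM2 hsf
    set q : ℝ := (L/(M:ℝ))^a * F with hq
    have hqpos : 0 < q := by
      rw [hq]
      have : (0:ℝ) < (M:ℝ) := by positivity
      positivity
    set v : ℕ → ℝ := fun k => (L/(M:ℝ))^a * (x N (k+1) - x N k)^(-a) - 1 with hv
    have hcb := hcore M q v hM2 hqpos (fun k hk => p1 k hk) (fun k hk => p2 k hk) p3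
      (by rw [hcast, hq, hcast]; exact hsm)
    rw [p4] at hcb
    rw [hcast] at hcb
    rw [← hNM] at hcb
    rw [hM] at hcb
    have hq' : (L/((N:ℝ)-1))^a*F = q := by rw [hq, hcast]
    calc |f N| = |(x N N - x N (N-1)) * ((N:ℝ)-1)/L - 1 + a⁻¹*q*((N:ℝ)-1-1)/2
        - a⁻¹*(a⁻¹+1)/12*q^2*((N:ℝ)-1-1)*((N:ℝ)-1-2)| := by
          congr 1
          simp only [hf]
          rw [← hq']
          ring
      _ ≤ C*(((N:ℝ)-1)*q)^3 := hcb
      _ = C * (((N:ℝ)-1) * ((L / ((N:ℝ)-1)) ^ a * F))^3 := by rw [hq']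
  -- BigO step
  have hBigO : f =O[atTop] (fun N : ℕ => (N:ℝ)^((1-a)*3)) := by
    rw [isBigO_iff]
    refine ⟨C * (L^a*F)^3 / 2^((1-a)*3), ?_⟩
    filter_upwards [hbound, eventually_ge_atTop 2] with N h1 h2
    have hNR : (2:ℝ) ≤ (N:ℝ) := by exact_mod_cast h2
    have hm : (0:ℝ) < (N:ℝ)-1 := by linarith
    have hNpos : (0:ℝ) < (N:ℝ) := by linarith
    rw [hmq N h2] at h1
    have e1 : (L^a * F * ((N:ℝ)-1)^(1-a))^3
        = (L^a*F)^3 * (((N:ℝ)-1)^(1-a))^3 := by ring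
    have e2 : (((N:ℝ)-1)^(1-a))^3 = ((N:ℝ)-1)^((1-a)*3) := by
      rw [Real.rpow_mul hm.le]
      rw [show ((3:ℝ)) = ((3:ℕ):ℝ) by norm_num, Real.rpow_natCast]
    have e3 : ((N:ℝ)-1)^((1-a)*3) ≤ ((N:ℝ)/2)^((1-a)*3) := by
      apply Real.rpow_le_rpow_of_nonpos (by linarith) (by linarith)
      nlinarith
    have e4 : ((N:ℝ)/2)^((1-a)*3) = (N:ℝ)^((1-a)*3) / 2^((1-a)*3) := by
      rw [Real.div_rpow hNpos.le (by norm_num : (0:ℝ) ≤ 2)]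
    have hpow2 : (0:ℝ) < 2^((1-a)*3) := Real.rpow_pos_of_pos (by norm_num) _
    have hrN : (0:ℝ) ≤ (N:ℝ)^((1-a)*3) := Real.rpow_nonneg hNpos.le _
    rw [Real.norm_eq_abs, Real.norm_eq_abs, abs_of_nonneg hrN]
    calc |f N| ≤ C * (L^a * F * ((N:ℝ)-1)^(1-a))^3 := h1
      _ = C * (L^a*F)^3 * (((N:ℝ)-1)^(1-a))^3 := by ring
      _ = C * (L^a*F)^3 * ((N:ℝ)-1)^((1-a)*3) := by rw [e2]
      _ ≤ C * (L^a*F)^3 * ((N:ℝ)^((1-a)*3) / 2^((1-a)*3)) := by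
          rw [← e4]
          have hc : (0:ℝ) ≤ C * (L^a*F)^3 := by positivity
          exact mul_le_mul_of_nonneg_left e3 hc
      _ = C * (L^a*F)^3 / 2^((1-a)*3) * (N:ℝ)^((1-a)*3) := by ring
  -- littleO step
  have hlo : (fun N : ℕ => (N:ℝ)^((1-a)*3)) =o[atTop]
      (fun N : ℕ => (N:ℝ)^(-2*a+2)) := by
    have h0 : ∀ᶠ N : ℕ in atTop, (N:ℝ)^(-2*a+2) = 0 → (N:ℝ)^((1-a)*3) = 0 := by
      filter_upwards [eventually_ge_atTop 1] with N hN h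
      have hNpos : (0:ℝ) < (N:ℝ) := by exact_mod_cast hN
      exact absurd h (ne_of_gt (Real.rpow_pos_of_pos hNpos _))
    rw [isLittleO_iff_tendsto' h0]
    have h1 : Tendsto (fun N : ℕ => ((N:ℝ))^(-(a-1))) atTop (nhds 0) :=
      (tendsto_rpow_neg_atTop (by linarith : (0:ℝ) < a-1)).comp
        tendsto_natCast_atTop_atTop
    apply h1.congr'
    filter_upwards [eventually_ge_atTop 1] with N hN
    have hNpos : (0:ℝ) < (N:ℝ) := by exact_mod_cast hN
    rw [← Real.rpow_sub hNpos]
    congr 1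
    ring
  exact hBigO.trans_isLittleO hlo
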